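/- arXiv:2602.07911 — 2 statements merged into one kernel-verified Lean document; each statement's English description precedes it below -/
import Mathlib

section
/- If W_j = \tilde{W}_j / A_j for j = 1,...,m with \tilde{W}_j ≥ 0, A_j > 0, and Δ := max_j |A_j − 1| ≤ 1/2, then for every k, |W_{(k)} − \tilde{W}_{(k)}| ≤ 2Δ · \tilde{W}_{(1)}, where X_{(k)} denotes the k-th largest order statistic. -/
/-- The `(k+1)`-th largest element of the tuple `w` (so `kthLargest w 0` is the maximum). -/
noncomputable def kthLargest {m : ℕ} (w : Fin m → ℝ) (k : ℕ) : ℝ :=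
  ((List.ofFn w).mergeSort (fun a b => decide (b ≤ a)))[k]!

private lemma sorted_desc {m : ℕ} (w : Fin m → ℝ) :
    ((List.ofFn w).mergeSort (fun a b => decide (b ≤ a))).Pairwise (· ≥ ·) := by
  have := List.pairwise_mergeSort (le := fun a b : ℝ => decide (b ≤ a))
    (fun a b c hab hbc => by simp_all; linarith)
    (fun a b => by simp [le_total b a]) (List.ofFn w)
  simpa [List.Pairwise, GE.ge] using this

private lemma sorted_rel (L : List ℝ) (hL : L.Pairwise (· ≥ ·)) {i j : ℕ}
    (hij : i ≤ j) (hj : j < L.length) : L[j] ≤ L[i] := by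
  have := hL.rel_get_of_le (a := ⟨i, lt_of_le_of_lt hij hj⟩) (b := ⟨j, hj⟩) (by simpa using hij)
  simpa using this

private lemma count_ge_of_le_kth (L : List ℝ) (hL : L.Pairwise (· ≥ ·)) (k : ℕ)
    (hk : k < L.length) (x : ℝ) (hx : x ≤ L[k]) :
    k + 1 ≤ L.countP (fun a => decide (x ≤ a)) := by
  have h1 : L.countP (fun a => decide (x ≤ a))
      = (L.take (k+1)).countP (fun a => decide (x ≤ a))
        + (L.drop (k+1)).countP (fun a => decide (x ≤ a)) := by
    rw [← List.countP_append, List.take_append_drop]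
  have h2 : (L.take (k+1)).countP (fun a => decide (x ≤ a)) = (L.take (k+1)).length := by
    rw [List.countP_eq_length]
    intro a ha
    obtain ⟨i, hi, rfl⟩ := List.mem_iff_getElem.1 ha
    have hi' : i < k + 1 := lt_of_lt_of_le hi (by simp [List.length_take])
    rw [List.getElem_take]
    simp only [decide_eq_true_eq]
    exact le_trans hx (sorted_rel L hL (Nat.lt_succ_iff.1 hi') hk)
  have h3 : (L.take (k+1)).length = k + 1 := by
    simp [List.length_take]; omega
  omega

private lemma le_kth_of_count_ge (L : List ℝ) (hL : L.Pairwise (· ≥ ·)) (k : ℕ)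
    (hk : k < L.length) (x : ℝ) (hx : k + 1 ≤ L.countP (fun a => decide (x ≤ a))) :
    x ≤ L[k] := by
  by_contra hlt
  push_neg at hlt
  have h1 : L.countP (fun a => decide (x ≤ a))
      = (L.take k).countP (fun a => decide (x ≤ a))
        + (L.drop k).countP (fun a => decide (x ≤ a)) := by
    rw [← List.countP_append, List.take_append_drop]
  have h2 : (L.drop k).countP (fun a => decide (x ≤ a)) = 0 := by
    rw [List.countP_eq_zero]
    intro a ha
    obtain ⟨i, hi, rfl⟩ := List.mem_iff_getElem.1 ha
    have hki : k + i < L.length := by simp [List.length_drop] at hi; omega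
    rw [List.getElem_drop]
    simp only [decide_eq_true_eq, not_le]
    exact lt_of_le_of_lt (sorted_rel L hL (Nat.le_add_right k i) hki) hlt
  have h3 : (L.take k).countP (fun a => decide (x ≤ a)) ≤ k :=
    le_trans List.countP_le_length (by simp [List.length_take])
  omega

private lemma countP_ofFn_le {m : ℕ} (w v : Fin m → ℝ) (p q : ℝ → Bool)
    (h : ∀ j, p (w j) = true → q (v j) = true) :
    (List.ofFn w).countP p ≤ (List.ofFn v).countP q := by
  induction m with
  | zero => simp
  | succ n ih =>
    rw [List.ofFn_succ, List.ofFn_succ, List.countP_cons, List.countP_cons]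
    have h1 := ih (fun i => w i.succ) (fun i => v i.succ) (fun j => h j.succ)
    have h2 : (if p (w 0) then 1 else 0) ≤ (if q (v 0) then 1 else 0) := by
      by_cases hp : p (w 0) = true
      · simp [hp, h 0 hp]
      · simp [hp]
    omega

private lemma kth_le_kth_add {m : ℕ} (w v : Fin m → ℝ) (ε : ℝ)
    (h : ∀ j, w j ≤ v j + ε) (k : ℕ) (hk : k < m) :
    kthLargest w k ≤ kthLargest v k + ε := by
  set Lw := (List.ofFn w).mergeSort (fun a b => decide (b ≤ a)) with hLw
  set Lv := (List.ofFn v).mergeSort (fun a b => decide (b ≤ a)) with hLv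
  have hlw : Lw.length = m := by simp [hLw, List.length_mergeSort]
  have hlv : Lv.length = m := by simp [hLv, List.length_mergeSort]
  have hkw : k < Lw.length := hlw ▸ hk
  have hkv : k < Lv.length := hlv ▸ hk
  have ew : kthLargest w k = Lw[k] := getElem!_pos Lw k hkw
  have ev : kthLargest v k = Lv[k] := getElem!_pos Lv k hkv
  rw [ew, ev]
  set x := Lw[k] with hx
  have c1 : k + 1 ≤ Lw.countP (fun a => decide (x ≤ a)) :=
    count_ge_of_le_kth Lw (sorted_desc w) k hkw x le_rfl
  have c2 : Lw.countP (fun a => decide (x ≤ a))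
      = (List.ofFn w).countP (fun a => decide (x ≤ a)) :=
    (List.mergeSort_perm _ _).countP_eq _
  have c3 : (List.ofFn w).countP (fun a => decide (x ≤ a))
      ≤ (List.ofFn v).countP (fun a => decide (x - ε ≤ a)) := by
    refine countP_ofFn_le w v _ _ (fun j hj => ?_)
    simp only [decide_eq_true_eq] at hj ⊢
    have := h j
    linarith
  have c4 : (List.ofFn v).countP (fun a => decide (x - ε ≤ a))
      = Lv.countP (fun a => decide (x - ε ≤ a)) :=
    ((List.mergeSort_perm _ _).countP_eq _).symm
  have := le_kth_of_count_ge Lv (sorted_desc v) k hkv (x - ε) (by omega)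
  linarith

private lemma abs_kth_sub_kth {m : ℕ} (w v : Fin m → ℝ) (ε : ℝ)
    (h : ∀ j, |w j - v j| ≤ ε) (k : ℕ) (hk : k < m) :
    |kthLargest w k - kthLargest v k| ≤ ε := by
  rw [abs_le]
  constructor
  · have := kth_le_kth_add v w ε (fun j => by have := abs_le.1 (h j); linarith) k hk
    linarith
  · have := kth_le_kth_add w v ε (fun j => by have := abs_le.1 (h j); linarith) k hk
    linarith

private lemma le_kth_zero {m : ℕ} (v : Fin m → ℝ) (j : Fin m) : v j ≤ kthLargest v 0 := by
  set Lv := (List.ofFn v).mergeSort (fun a b => decide (b ≤ a)) with hLv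
  have hlv : Lv.length = m := by simp [hLv, List.length_mergeSort]
  have h0 : 0 < Lv.length := hlv ▸ j.pos
  have e : kthLargest v 0 = Lv[0] := getElem!_pos Lv 0 h0
  rw [e]
  refine le_kth_of_count_ge Lv (sorted_desc v) 0 h0 (v j) ?_
  rw [(List.mergeSort_perm _ _).countP_eq]
  have : 0 < (List.ofFn v).countP (fun a => decide (v j ≤ a)) := by
    rw [List.countP_pos_iff]
    exact ⟨v j, by simp [List.mem_ofFn], by simp⟩
  omega

/-- If `W j = tW j / A j` with `tW j ≥ 0`, `A j > 0` and `Δ = max_j |A j − 1| ≤ 1/2`, then for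
every `k`, `|W_(k) − tW_(k)| ≤ 2 Δ tW_(1)` where `X_(k)` is the k-th largest order statistic. -/
theorem orderStat_perturbation {m : ℕ} (hm : 0 < m) (tW A : Fin m → ℝ)
    (htW : ∀ j, 0 ≤ tW j) (hA : ∀ j, 0 < A j)
    (W : Fin m → ℝ) (hW : ∀ j, W j = tW j / A j)
    (Δ : ℝ)
    (hΔdef : Δ = (Finset.univ.sup' (Finset.univ_nonempty_iff.mpr ⟨⟨0, hm⟩⟩)
      (fun j => |A j - 1|)))
    (hΔhalf : Δ ≤ 1 / 2) :
    ∀ k : Fin m, |kthLargest W k.val - kthLargest tW k.val| ≤ 2 * Δ * kthLargest tW 0 := by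
  intro k
  set M := kthLargest tW 0 with hM
  have hΔj : ∀ j, |A j - 1| ≤ Δ := fun j => by rw [hΔdef]; exact Finset.le_sup' (fun j => |A j - 1|) (Finset.mem_univ j)
  have hΔ0 : 0 ≤ Δ := le_trans (abs_nonneg _) (hΔj ⟨0, hm⟩)
  have hMj : ∀ j, tW j ≤ M := fun j => le_kth_zero tW j
  have hM0 : 0 ≤ M := le_trans (htW ⟨0, hm⟩) (hMj ⟨0, hm⟩)
  have key : ∀ j, |W j - tW j| ≤ 2 * Δ * M := by
    intro j
    have hAj := hA j
    have habs := abs_le.1 (hΔj j)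
    have hAhalf : 1/2 ≤ A j := by linarith
    have hWd : W j - tW j = tW j * (1 - A j) / A j := by
      rw [hW j]; field_simp
    rw [hWd, abs_div, abs_of_pos hAj, abs_mul, abs_of_nonneg (htW j)]
    rw [div_le_iff₀ hAj]
    have h1 : |1 - A j| ≤ Δ := by rw [abs_sub_comm]; exact hΔj j
    have h2 : tW j * |1 - A j| ≤ tW j * Δ := mul_le_mul_of_nonneg_left h1 (htW j)
    have h3 : tW j * Δ ≤ M * Δ := mul_le_mul_of_nonneg_right (hMj j) hΔ0
    nlinarith [mul_le_mul_of_nonneg_left hAhalf (mul_nonneg (mul_nonneg (by norm_num : (0:ℝ) ≤ 2) hΔ0) hM0)]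
  exact abs_kth_sub_kth W tW (2 * Δ * M) key k.val k.isLt
end

section
/- Let X have a chi-squared distribution with r degrees of freedom (r ≥ 1). Then for every t > 0, P(X − r ≥ 2√(rt) + 2t) ≤ e^{−t} and P(r − X ≥ 2√(rt)) ≤ e^{−t}. -/
open MeasureTheory ProbabilityTheory Real

/-- The chi-squared distribution with `r` degrees of freedom, as a Gamma distribution with
shape `r/2` and rate `1/2`. -/
noncomputable def chiSquared (r : ℕ) : Measure ℝ :=
  ProbabilityTheory.gammaMeasure (r / 2 : ℝ) (1 / 2 : ℝ)

lemma lm_quad_le_exp {u : ℝ} (hu : 0 ≤ u) : 1 + u + u ^ 2 / 2 ≤ Real.exp u := by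
  have h := Real.sum_le_exp_of_nonneg hu 3
  simp [Finset.sum_range_succ, Nat.factorial] at h
  nlinarith [h]

lemma lm_one_sub_le_exp {u : ℝ} (hu : 0 ≤ u) : 1 - u ≤ Real.exp (-u - u ^ 2 / 2) := by
  set f : ℝ → ℝ := fun v => (1 - v) * Real.exp (v + v ^ 2 / 2) with hf
  have hder : ∀ x : ℝ, HasDerivAt f (-(x ^ 2) * Real.exp (x + x ^ 2 / 2)) x := by
    intro x
    have h1 : HasDerivAt (fun v : ℝ => 1 - v) (-1) x := (hasDerivAt_id x).const_sub 1
    have h2 : HasDerivAt (fun v : ℝ => v + v ^ 2 / 2) (1 + x) x := by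
      have := (hasDerivAt_id x).add ((hasDerivAt_pow 2 x).div_const 2)
      refine this.congr_deriv ?_
      · norm_num
    have h3 := h2.exp
    have := h1.mul h3
    refine this.congr_deriv ?_
    ring
  have hanti : Antitone f := by
    apply antitone_of_deriv_nonpos
    · exact fun x => (hder x).differentiableAt
    · intro x
      rw [(hder x).deriv]
      nlinarith [Real.exp_pos (x + x ^ 2 / 2), sq_nonneg x]
  have hfu : f u ≤ f 0 := hanti hu
  have hf0 : f 0 = 1 := by simp [hf]
  rw [hf0] at hfu
  have hepos : 0 < Real.exp (u + u ^ 2 / 2) := Real.exp_pos _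
  have : (1 - u) ≤ 1 / Real.exp (u + u ^ 2 / 2) := by
    rw [le_div_iff₀ hepos]
    simpa [hf] using hfu
  calc (1 : ℝ) - u ≤ 1 / Real.exp (u + u ^ 2 / 2) := this
    _ = Real.exp (-u - u ^ 2 / 2) := by
        rw [show -u - u ^ 2 / 2 = -(u + u ^ 2 / 2) by ring, Real.exp_neg, one_div]

lemma lm_lintegral_exp_gamma {a lam s : ℝ} (ha : 0 < a) (hlam : 0 < lam) (hs : s < lam) :
    ∫⁻ x, ENNReal.ofReal (Real.exp (s * x)) ∂(gammaMeasure a lam)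
      = ENNReal.ofReal ((lam / (lam - s)) ^ a) := by
  have hls : 0 < lam - s := by linarith
  have hmeas : Measurable fun x : ℝ => ENNReal.ofReal (Real.exp (s * x)) :=
    Measurable.ennreal_ofReal (by fun_prop)
  have hpdf : Measurable (gammaPDF a lam) := (measurable_gammaPDFReal a lam).ennreal_ofReal
  rw [gammaMeasure, lintegral_withDensity_eq_lintegral_mul _ hpdf hmeas]
  have key : ∀ x : ℝ, gammaPDF a lam x * ENNReal.ofReal (Real.exp (s * x))
      = ENNReal.ofReal ((lam / (lam - s)) ^ a) * gammaPDF a (lam - s) x := by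
    intro x
    rcases lt_or_ge x 0 with hx | hx
    · rw [gammaPDF_of_neg hx, gammaPDF_of_neg hx, zero_mul, mul_zero]
    · rw [gammaPDF_of_nonneg hx, gammaPDF_of_nonneg hx,
        ← ENNReal.ofReal_mul (by positivity), ← ENNReal.ofReal_mul (by positivity)]
      congr 1
      have hpow : lam ^ a = (lam / (lam - s)) ^ a * (lam - s) ^ a := by
        rw [← Real.mul_rpow (by positivity) hls.le, div_mul_cancel₀ _ hls.ne']
      have hexp : Real.exp (-(lam * x)) * Real.exp (s * x)
          = Real.exp (-((lam - s) * x)) := by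
        rw [← Real.exp_add]; ring_nf
      rw [hpow, ← hexp]
      ring
  simp only [Pi.mul_apply]
  simp_rw [key]
  have hpdf2 : Measurable (gammaPDF a (lam - s)) :=
    (measurable_gammaPDFReal a (lam - s)).ennreal_ofReal
  rw [lintegral_const_mul _ hpdf2, lintegral_gammaPDF_eq_one ha hls, mul_one]

lemma lm_chernoff_upper {a lam s z : ℝ} (ha : 0 < a) (hlam : 0 < lam)
    (hs0 : 0 ≤ s) (hs : s < lam) :
    gammaMeasure a lam (Set.Ici z)
      ≤ ENNReal.ofReal (Real.exp (-(s * z)) * (lam / (lam - s)) ^ a) := by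
  have h1 : gammaMeasure a lam (Set.Ici z)
      ≤ ∫⁻ x, ENNReal.ofReal (Real.exp (-(s * z)) * Real.exp (s * x)) ∂(gammaMeasure a lam) := by
    rw [← lintegral_indicator_one measurableSet_Ici]
    apply lintegral_mono
    intro x
    by_cases hx : x ∈ Set.Ici z
    · rw [Set.indicator_of_mem hx]
      simp only [Pi.one_apply]
      apply ENNReal.one_le_ofReal.2
      rw [← Real.exp_add]
      apply Real.one_le_exp
      have : z ≤ x := hx
      nlinarith
    · rw [Set.indicator_of_notMem hx]
      exact zero_le
  refine h1.trans ?_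
  have hmeas : Measurable fun x : ℝ => ENNReal.ofReal (Real.exp (s * x)) :=
    Measurable.ennreal_ofReal (by fun_prop)
  simp_rw [ENNReal.ofReal_mul (Real.exp_nonneg _)]
  rw [lintegral_const_mul _ hmeas,
    lm_lintegral_exp_gamma ha hlam hs, ← ENNReal.ofReal_mul (Real.exp_nonneg _)]

lemma lm_chernoff_lower {a lam s z : ℝ} (ha : 0 < a) (hlam : 0 < lam)
    (hs0 : s ≤ 0) :
    gammaMeasure a lam (Set.Iic z)
      ≤ ENNReal.ofReal (Real.exp (-(s * z)) * (lam / (lam - s)) ^ a) := by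
  have hs : s < lam := lt_of_le_of_lt hs0 hlam
  have h1 : gammaMeasure a lam (Set.Iic z)
      ≤ ∫⁻ x, ENNReal.ofReal (Real.exp (-(s * z)) * Real.exp (s * x)) ∂(gammaMeasure a lam) := by
    rw [← lintegral_indicator_one measurableSet_Iic]
    apply lintegral_mono
    intro x
    by_cases hx : x ∈ Set.Iic z
    · rw [Set.indicator_of_mem hx]
      simp only [Pi.one_apply]
      apply ENNReal.one_le_ofReal.2
      rw [← Real.exp_add]
      apply Real.one_le_exp
      have : x ≤ z := hx
      nlinarith
    · rw [Set.indicator_of_notMem hx]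
      exact zero_le
  refine h1.trans ?_
  have hmeas : Measurable fun x : ℝ => ENNReal.ofReal (Real.exp (s * x)) :=
    Measurable.ennreal_ofReal (by fun_prop)
  simp_rw [ENNReal.ofReal_mul (Real.exp_nonneg _)]
  rw [lintegral_const_mul _ hmeas,
    lm_lintegral_exp_gamma ha hlam hs, ← ENNReal.ofReal_mul (Real.exp_nonneg _)]

lemma lm_gamma_Iic_nonpos {a lam c : ℝ} (hc : c ≤ 0) :
    gammaMeasure a lam (Set.Iic c) = 0 := by
  have hsub : Set.Iic c ⊆ Set.Iio 0 ∪ {0} := by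
    intro x hx
    rcases lt_or_eq_of_le (le_trans hx hc) with h | h
    · exact Or.inl h
    · exact Or.inr h
  refine le_antisymm ?_ zero_le
  refine le_trans (measure_mono hsub) (le_trans (measure_union_le _ _) ?_)
  have h1 : gammaMeasure a lam (Set.Iio 0) = 0 := by
    rw [gammaMeasure, withDensity_apply _ measurableSet_Iio]
    exact lintegral_gammaPDF_of_nonpos le_rfl
  have h2 : gammaMeasure a lam ({0} : Set ℝ) = 0 := by
    rw [gammaMeasure, withDensity_apply _ (measurableSet_singleton 0)]
    rw [setLIntegral_measure_zero _ _ (by simp)]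
  rw [h1, h2, add_zero]

/-- Laurent–Massart tail bounds for the chi-squared distribution with `r ≥ 1` degrees of
freedom: for every `t > 0`, `P(X − r ≥ 2√(rt) + 2t) ≤ e^{−t}` and
`P(r − X ≥ 2√(rt)) ≤ e^{−t}`. -/
theorem chiSquared_laurent_massart {Ω : Type*} [MeasurableSpace Ω]
    (μ : Measure Ω) [IsProbabilityMeasure μ]
    (r : ℕ) (hr : 1 ≤ r) (X : Ω → ℝ) (hX : μ.map X = chiSquared r) :
    ∀ t : ℝ, 0 < t →
      μ {ω | 2 * Real.sqrt (r * t) + 2 * t ≤ X ω - r} ≤ ENNReal.ofReal (Real.exp (-t)) ∧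
      μ {ω | 2 * Real.sqrt (r * t) ≤ (r : ℝ) - X ω} ≤ ENNReal.ofReal (Real.exp (-t)) := by
  intro t ht
  have hr' : (1 : ℝ) ≤ (r : ℝ) := by exact_mod_cast hr
  have hr0 : (0 : ℝ) < (r : ℝ) := by linarith
  have ha : (0 : ℝ) < (r : ℝ) / 2 := by linarith
  haveI hprob : IsProbabilityMeasure (chiSquared r) :=
    isProbabilityMeasure_gammaMeasure ha one_half_pos
  have hXm : AEMeasurable X μ := aemeasurable_of_map_neZero (by rw [hX]; infer_instance)
  have hmap : ∀ s : Set ℝ, MeasurableSet s → μ (X ⁻¹' s) = chiSquared r s := by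
    intro s hs
    rw [← hX, Measure.map_apply_of_aemeasurable hXm hs]
  set b := Real.sqrt ((r : ℝ) * t) with hb
  have hb0 : 0 < b := Real.sqrt_pos.2 (by positivity)
  have hbsq : b ^ 2 = (r : ℝ) * t := Real.sq_sqrt (by positivity)
  constructor
  · -- upper tail
    set x : ℝ := 2 * b + 2 * t with hxdef
    have hx0 : 0 < x := by positivity
    have hset : {ω | 2 * b + 2 * t ≤ X ω - r} = X ⁻¹' Set.Ici ((r : ℝ) + x) := by
      ext ω
      simp only [Set.mem_setOf_eq, Set.mem_preimage, Set.mem_Ici, hxdef]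
      constructor <;> intro h <;> linarith
    rw [hset, hmap _ measurableSet_Ici]
    set s : ℝ := x / (2 * ((r : ℝ) + x)) with hsdef
    have hrx : 0 < (r : ℝ) + x := by linarith
    have hs0 : 0 ≤ s := by positivity
    have hshalf : s < 1 / 2 := by
      rw [hsdef, div_lt_iff₀ (by positivity)]
      nlinarith
    have hbound := lm_chernoff_upper (a := (r : ℝ) / 2) (z := (r : ℝ) + x)
      ha one_half_pos hs0 hshalf
    refine le_trans hbound ?_
    apply ENNReal.ofReal_le_ofReal
    have hsz : s * ((r : ℝ) + x) = x / 2 := by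
      rw [hsdef]; field_simp; try ring
    have hlamdiv : (1 / 2 : ℝ) / (1 / 2 - s) = ((r : ℝ) + x) / r := by
      rw [hsdef]; field_simp; try ring
      exact mul_inv_cancel₀ hr0.ne'
    rw [hsz, hlamdiv]
    -- key : ((r+x)/r)^(r/2) ≤ exp (x/2 - t)
    have hu : (0 : ℝ) ≤ 2 * b / r := by positivity
    have hkey1 : ((r : ℝ) + x) / r ≤ Real.exp (2 * b / r) := by
      have h := lm_quad_le_exp hu
      have heq : 1 + 2 * b / r + (2 * b / r) ^ 2 / 2 = ((r : ℝ) + x) / r + (2 * b ^ 2 / r ^ 2 - 2 * t / r) := by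
        field_simp
        ring
      have h2 : 2 * b ^ 2 / (r : ℝ) ^ 2 - 2 * t / r = (2 / r ^ 2) * (b ^ 2 - r * t) := by
        field_simp
      rw [heq, h2, hbsq, sub_self, mul_zero, add_zero] at h
      exact h
    have hpow : (((r : ℝ) + x) / r) ^ ((r : ℝ) / 2) ≤ Real.exp (x / 2 - t) := by
      have h1 : (((r : ℝ) + x) / r) ^ ((r : ℝ) / 2) ≤ (Real.exp (2 * b / r)) ^ ((r : ℝ) / 2) :=
        Real.rpow_le_rpow (by positivity) hkey1 (by positivity)
      refine h1.trans_eq ?_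
      rw [← Real.exp_mul]
      congr 1
      have : 2 * b / r * (r / 2) = b := by field_simp
      rw [this]
      have : x / 2 - t = b := by rw [hxdef]; ring
      rw [this]
    calc Real.exp (-(x / 2)) * (((r : ℝ) + x) / r) ^ ((r : ℝ) / 2)
        ≤ Real.exp (-(x / 2)) * Real.exp (x / 2 - t) := by
          exact mul_le_mul_of_nonneg_left hpow (Real.exp_nonneg _)
      _ = Real.exp (-t) := by rw [← Real.exp_add]; ring_nf
  · -- lower tail
    set x : ℝ := 2 * b with hxdef
    have hset : {ω | 2 * b ≤ (r : ℝ) - X ω} = X ⁻¹' Set.Iic ((r : ℝ) - x) := by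
      ext ω
      simp only [Set.mem_setOf_eq, Set.mem_preimage, Set.mem_Iic, hxdef]
      constructor <;> intro h <;> linarith
    rw [hset, hmap _ measurableSet_Iic]
    rcases le_or_gt ((r : ℝ) - x) 0 with hneg | hpos
    · rw [show chiSquared r = gammaMeasure ((r : ℝ) / 2) (1 / 2 : ℝ) from rfl,
        lm_gamma_Iic_nonpos hneg]
      exact zero_le
    · -- 0 < r - x
      have hxr : x < (r : ℝ) := by linarith
      set s : ℝ := -(x / (2 * ((r : ℝ) - x))) with hsdef
      have hs0 : s ≤ 0 := by
        rw [hsdef]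
        have : 0 ≤ x / (2 * ((r : ℝ) - x)) := by positivity
        linarith
      have hbound := lm_chernoff_lower (a := (r : ℝ) / 2) (z := (r : ℝ) - x)
        ha one_half_pos hs0
      refine le_trans hbound ?_
      apply ENNReal.ofReal_le_ofReal
      have hsz : -(s * ((r : ℝ) - x)) = x / 2 := by
        rw [hsdef]; field_simp; try ring
      have hlamdiv : (1 / 2 : ℝ) / (1 / 2 - s) = ((r : ℝ) - x) / r := by
        rw [hsdef]; field_simp; try ring
        exact mul_inv_cancel₀ hr0.ne'
      rw [hsz, hlamdiv]
      -- key : ((r-x)/r)^(r/2) ≤ exp (-(x/2) - t)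
      set u : ℝ := x / r with hudef
      have hu0 : 0 ≤ u := by positivity
      have hu1 : ((r : ℝ) - x) / r = 1 - u := by rw [hudef]; field_simp
      have hkey1 : ((r : ℝ) - x) / r ≤ Real.exp (-u - u ^ 2 / 2) := by
        rw [hu1]; exact lm_one_sub_le_exp hu0
      have hexparg : (-u - u ^ 2 / 2) * ((r : ℝ) / 2) = -(x / 2) - t := by
        have husq : u ^ 2 = 4 * t / r := by
          rw [hudef, hxdef, div_pow]
          rw [show (2 * b) ^ 2 = 4 * b ^ 2 by ring, hbsq]
          field_simp
        rw [husq, hudef]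
        field_simp
        ring
      have hpow : (((r : ℝ) - x) / r) ^ ((r : ℝ) / 2) ≤ Real.exp (-(x / 2) - t) := by
        have h1 : (((r : ℝ) - x) / r) ^ ((r : ℝ) / 2)
            ≤ (Real.exp (-u - u ^ 2 / 2)) ^ ((r : ℝ) / 2) :=
          Real.rpow_le_rpow (by positivity) hkey1 (by positivity)
        refine h1.trans_eq ?_
        rw [← Real.exp_mul, hexparg]
      calc Real.exp (x / 2) * (((r : ℝ) - x) / r) ^ ((r : ℝ) / 2)
          ≤ Real.exp (x / 2) * Real.exp (-(x / 2) - t) :=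
            mul_le_mul_of_nonneg_left hpow (Real.exp_nonneg _)
        _ = Real.exp (-t) := by rw [← Real.exp_add]; ring_nf
end
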